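/- The function (φ, ρ) ↦ −(n + 2α − 2)·log ρ + (1/2)‖ρy − Xφ‖₂² + λ‖φ‖₁ + ξρ² is convex on ℝ^d × (0,∞) whenever n ≥ 2 − 2α, λ ≥ 0, ξ ≥ 0; hence the transformed LassoDA target π_T(φ,ρ) ∝ ρ^{n+2α−2}·exp(−(1/2)‖ρy − Xφ‖₂² − λ‖φ‖₁ − ξρ²) is log-concave. -/

import Mathlib

open Matrix

section aux

lemma aux_convex_S {d : ℕ} : Convex ℝ {p : (Fin d → ℝ) × ℝ | 0 < p.2} := by
  have : {p : (Fin d → ℝ) × ℝ | 0 < p.2} =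
      (LinearMap.snd ℝ (Fin d → ℝ) ℝ) ⁻¹' Set.Ioi 0 := rfl
  rw [this]
  exact (convex_Ioi (0:ℝ)).linear_preimage _

lemma aux_sq_lin {E : Type*} [AddCommGroup E] [Module ℝ E]
    (L : E →ₗ[ℝ] ℝ) : ConvexOn ℝ Set.univ (fun p => (L p) ^ 2) := by
  have h := (Even.convexOn_pow (even_two)).comp_affineMap L.toAffineMap
  exact h

lemma aux_convexOn_sum {ι E : Type*} [AddCommGroup E] [Module ℝ E]
    (t : Finset ι) {s : Set E} (hs : Convex ℝ s) {f : ι → E → ℝ}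
    (h : ∀ i ∈ t, ConvexOn ℝ s (f i)) :
    ConvexOn ℝ s (fun x => ∑ i ∈ t, f i x) := by
  classical
  induction t using Finset.cons_induction with
  | empty => simpa using convexOn_const 0 hs
  | cons a t ha ih =>
    simp only [Finset.sum_cons]
    exact (h a (Finset.mem_cons_self a t)).add
      (ih fun i hi => h i (Finset.mem_cons_of_mem hi))

end aux

/-- The negative log-density of the transformed LassoDA target is jointly convex on
`ℝ^d × (0,∞)` when `n ≥ 2 − 2α`, `λ ≥ 0`, `ξ ≥ 0`; hence the transformed target
`π_T(φ,ρ) ∝ ρ^{n+2α−2}·exp(−(1/2)‖ρy − Xφ‖² − λ‖φ‖₁ − ξρ²)` is log-concave. -/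
theorem stmt13 {n d : ℕ} (y : Fin n → ℝ) (X : Matrix (Fin n) (Fin d) ℝ)
    (α lam ξ : ℝ) (hn : (n : ℝ) ≥ 2 - 2 * α) (hlam : 0 ≤ lam) (hξ : 0 ≤ ξ) :
    ConvexOn ℝ {p : (Fin d → ℝ) × ℝ | 0 < p.2}
      (fun p =>
        -(((n : ℝ) + 2 * α - 2) * Real.log p.2)
          + (1 / 2) * (∑ i, (p.2 * y i - X.mulVec p.1 i) ^ 2)
          + lam * (∑ j, |p.1 j|) + ξ * p.2 ^ 2) := by
  set S : Set ((Fin d → ℝ) × ℝ) := {p | 0 < p.2} with hSdef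
  have hS : Convex ℝ S := aux_convex_S
  have hc : (0:ℝ) ≤ (n : ℝ) + 2 * α - 2 := by linarith
  -- term 1
  have h1 : ConvexOn ℝ S (fun p : (Fin d → ℝ) × ℝ =>
      -(((n : ℝ) + 2 * α - 2) * Real.log p.2)) := by
    have hlog : ConvexOn ℝ (Set.Ioi (0:ℝ)) (fun x => -Real.log x) :=
      strictConcaveOn_log_Ioi.concaveOn.neg
    have h := (hlog.comp_affineMap
      (LinearMap.snd ℝ (Fin d → ℝ) ℝ).toAffineMap).smul hc
    convert h using 2 with p
    · rfl
    · rfl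
    · rfl
    · rfl
    · rfl
    simp [smul_eq_mul]
  -- term 2
  have h2 : ConvexOn ℝ S (fun p : (Fin d → ℝ) × ℝ =>
      (1 / 2) * (∑ i, (p.2 * y i - X.mulVec p.1 i) ^ 2)) := by
    have hsum : ConvexOn ℝ S (fun p : (Fin d → ℝ) × ℝ =>
        ∑ i, (p.2 * y i - X.mulVec p.1 i) ^ 2) := by
      apply aux_convexOn_sum _ hS
      intro i _
      have hL := aux_sq_lin ((y i) • (LinearMap.snd ℝ (Fin d → ℝ) ℝ)
        - (LinearMap.proj i).comp ((X.mulVecLin).comp (LinearMap.fst ℝ (Fin d → ℝ) ℝ)))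
      have := hL.subset (Set.subset_univ S) hS
      convert this using 2 with p
      simp [mulVecLin, smul_eq_mul]
      ring_nf
    have := hsum.smul (by norm_num : (0:ℝ) ≤ 1/2)
    simpa [smul_eq_mul] using this
  -- term 3
  have h3 : ConvexOn ℝ S (fun p : (Fin d → ℝ) × ℝ =>
      lam * (∑ j, |p.1 j|)) := by
    have hsum : ConvexOn ℝ S (fun p : (Fin d → ℝ) × ℝ => ∑ j, |p.1 j|) := by
      apply aux_convexOn_sum _ hS
      intro j _
      have habs : ConvexOn ℝ (Set.univ : Set ℝ) (fun x => |x|) := by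
        exact (convexOn_univ_norm (E := ℝ))
      have := habs.comp_affineMap
        ((LinearMap.proj j).comp (LinearMap.fst ℝ (Fin d → ℝ) ℝ)).toAffineMap
      exact (this.subset (Set.subset_univ S) hS)
    simpa [smul_eq_mul] using hsum.smul hlam
  -- term 4
  have h4 : ConvexOn ℝ S (fun p : (Fin d → ℝ) × ℝ => ξ * p.2 ^ 2) := by
    have := (aux_sq_lin (LinearMap.snd ℝ (Fin d → ℝ) ℝ)).subset
      (Set.subset_univ S) hS
    simpa [smul_eq_mul] using this.smul hξ
  exact ((h1.add h2).add h3).add h4
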